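/- Let x₁,…,x_n be n distinct points in ℝᵈ and θ ∈ ℝⁿ. Then there exists a convex function f : ℝᵈ → ℝ with f(x_i) = θ_i for all i = 1,…,n if and only if there exist vectors ξ₁,…,ξ_n ∈ ℝᵈ such that ⟨ξ_j, x_k − x_j⟩ ≤ θ_k − θ_j for all j ≠ k in {1,…,n}. -/

import Mathlib

open Matrix

/-- Every real-valued convex function on `ℝᵈ` has a subgradient at every point. -/
lemma exists_subgradient_of_convexOn {d : ℕ} {f : (Fin d → ℝ) → ℝ}
    (hf : ConvexOn ℝ Set.univ f) (x₀ : Fin d → ℝ) :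
    ∃ ξ : Fin d → ℝ, ∀ y, ξ ⬝ᵥ (y - x₀) ≤ f y - f x₀ := by
  have hcont : Continuous f :=
    continuousOn_univ.mp (hf.continuousOn isOpen_univ)
  set S : Set ((Fin d → ℝ) × ℝ) := {p | f p.1 < p.2} with hS
  have hSopen : IsOpen S := isOpen_lt (hcont.comp continuous_fst) continuous_snd
  have hSconv : Convex ℝ S := by
    rintro p hp q hq a b ha hb hab
    simp only [hS, Set.mem_setOf_eq] at hp hq ⊢
    have h1 : f (a • p.1 + b • q.1) ≤ a * f p.1 + b * f q.1 :=
      hf.2 (Set.mem_univ _) (Set.mem_univ _) ha hb hab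
    have h2 : a * f p.1 + b * f q.1 < a * p.2 + b * q.2 := by
      rcases eq_or_lt_of_le ha with rfl | ha'
      · have hb1 : b = 1 := by linarith
        simpa [hb1] using hq
      · rcases eq_or_lt_of_le hb with rfl | hb'
        · have ha1 : a = 1 := by linarith
          simpa [ha1] using hp
        · have := mul_lt_mul_of_pos_left hp ha'
          have := mul_lt_mul_of_pos_left hq hb'
          linarith
    calc f (a • p.1 + b • q.1) ≤ a * f p.1 + b * f q.1 := h1
      _ < a * p.2 + b * q.2 := h2
      _ = (a • p + b • q).2 := rfl
  have hpt : (x₀, f x₀) ∉ S := by simp [hS]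
  obtain ⟨g, hg⟩ := geometric_hahn_banach_point_open hSconv hSopen hpt
  -- decompose g
  have hdecomp : ∀ (y : Fin d → ℝ) (t : ℝ), g (y, t) = g (y, 0) + t * g (0, 1) := by
    intro y t
    have h : (y, t) = (y, (0 : ℝ)) + t • ((0 : Fin d → ℝ), (1 : ℝ)) := by
      simp [Prod.ext_iff]
    rw [h, map_add, g.map_smul, smul_eq_mul]
  set b : ℝ := g (0, 1) with hb
  have hbpos : 0 < b := by
    have h1 : ((x₀, f x₀ + 1) : (Fin d → ℝ) × ℝ) ∈ S := by simp [hS]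
    have h2 := hg _ h1
    rw [hdecomp x₀ (f x₀ + 1), hdecomp x₀ (f x₀)] at h2
    linarith
  have hb' : b ≠ 0 := hbpos.ne'
  have key : ∀ y, g (x₀, 0) + f x₀ * b ≤ g (y, 0) + f y * b := by
    intro y
    by_contra hcon
    push_neg at hcon
    set ε : ℝ := (g (x₀, 0) + f x₀ * b) - (g (y, 0) + f y * b) with hεdef
    have hε : 0 < ε := by simp only [hεdef]; linarith
    have hmem : ((y, f y + ε / b) : (Fin d → ℝ) × ℝ) ∈ S := by
      simp only [hS, Set.mem_setOf_eq]
      have : 0 < ε / b := div_pos hε hbpos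
      linarith
    have h3 := hg _ hmem
    rw [hdecomp y (f y + ε / b), hdecomp x₀ (f x₀)] at h3
    have hεb : (f y + ε / b) * b = f y * b + ε := by
      field_simp
    nlinarith
  -- linear part as a vector
  set e : Fin d → (Fin d → ℝ) := fun i => fun j => if i = j then 1 else 0 with he
  have hlin : ∀ v : Fin d → ℝ, g (v, 0) = ∑ i, v i * g (e i, 0) := by
    intro v
    have : g (v, 0) =
        (g.toLinearMap.comp (LinearMap.inl ℝ (Fin d → ℝ) ℝ)) v := rfl
    rw [this, LinearMap.pi_apply_eq_sum_univ]
    simp [he, smul_eq_mul]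
  refine ⟨fun i => -b⁻¹ * g (e i, 0), fun y => ?_⟩
  have hdot : (fun i => -b⁻¹ * g (e i, 0)) ⬝ᵥ (y - x₀)
      = -b⁻¹ * (g (y, 0) - g (x₀, 0)) := by
    rw [hlin y, hlin x₀, mul_sub, Finset.mul_sum, Finset.mul_sum,
      ← Finset.sum_sub_distrib]
    exact Finset.sum_congr rfl (fun i _ => by simp [dotProduct]; ring)
  rw [show ((fun i => -b⁻¹ * g (e i, 0)) ⬝ᵥ (y - x₀)) = _ from hdot]
  have hkey := key y
  have h5 := mul_le_mul_of_nonneg_left hkey (inv_pos.mpr hbpos).le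
  have e1 : b⁻¹ * (f x₀ * b) = f x₀ := by field_simp
  have e2 : b⁻¹ * (f y * b) = f y := by field_simp
  rw [mul_add, mul_add, e1, e2] at h5
  have e3 : -b⁻¹ * (g (y, 0) - g (x₀, 0)) = b⁻¹ * g (x₀, 0) - b⁻¹ * g (y, 0) := by ring
  rw [e3]
  linarith

/-- For distinct points `x₁,…,x_n ∈ ℝᵈ` and values `θ ∈ ℝⁿ`, there is a
convex function `f : ℝᵈ → ℝ` interpolating `f(xᵢ) = θᵢ` iff there exist subgradient
vectors `ξ₁,…,ξ_n ∈ ℝᵈ` with `⟨ξⱼ, x_k − x_j⟩ ≤ θ_k − θ_j` for all `j ≠ k`. -/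
theorem convex_interpolation_iff_subgradients {n d : ℕ}
    (x : Fin n → (Fin d → ℝ)) (hx : Function.Injective x) (θ : Fin n → ℝ) :
    (∃ f : (Fin d → ℝ) → ℝ, ConvexOn ℝ Set.univ f ∧ ∀ i, f (x i) = θ i) ↔
      (∃ ξ : Fin n → (Fin d → ℝ), ∀ j k : Fin n, j ≠ k →
        ξ j ⬝ᵥ (x k - x j) ≤ θ k - θ j) := by
  constructor
  · rintro ⟨f, hf, hfx⟩
    choose ξ hξ using fun j => exists_subgradient_of_convexOn hf (x j)
    refine ⟨ξ, fun j k _ => ?_⟩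
    have := hξ j (x k)
    rwa [hfx j, hfx k] at this
  · rintro ⟨ξ, hξ⟩
    rcases Nat.eq_zero_or_pos n with rfl | hn
    · exact ⟨fun _ => 0, convexOn_const 0 convex_univ, fun i => i.elim0⟩
    have hne : (Finset.univ : Finset (Fin n)).Nonempty := ⟨⟨0, hn⟩, Finset.mem_univ _⟩
    refine ⟨fun y => Finset.univ.sup' hne (fun j => θ j + ξ j ⬝ᵥ (y - x j)), ?_, ?_⟩
    · refine ⟨convex_univ, fun u _ v _ a c ha hc hac => ?_⟩
      refine Finset.sup'_le _ _ (fun j _ => ?_)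
      have hxj : x j = a • x j + c • x j := by rw [← add_smul, hac, one_smul]
      have hsplit : a • u + c • v - x j = a • (u - x j) + c • (v - x j) := by
        rw [smul_sub, smul_sub]
        nth_rewrite 1 [hxj]
        abel
      rw [hsplit, dotProduct_add, dotProduct_smul, dotProduct_smul, smul_eq_mul, smul_eq_mul]
      have h1 : θ j + ξ j ⬝ᵥ (u - x j) ≤ Finset.univ.sup' hne (fun j => θ j + ξ j ⬝ᵥ (u - x j)) :=
        Finset.le_sup' (fun j => θ j + ξ j ⬝ᵥ (u - x j)) (Finset.mem_univ j)
      have h2 : θ j + ξ j ⬝ᵥ (v - x j) ≤ Finset.univ.sup' hne (fun j => θ j + ξ j ⬝ᵥ (v - x j)) :=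
        Finset.le_sup' (fun j => θ j + ξ j ⬝ᵥ (v - x j)) (Finset.mem_univ j)
      have hθ : θ j = a * θ j + c * θ j := by rw [← add_mul, hac, one_mul]
      simp only [smul_eq_mul]
      nlinarith [mul_le_mul_of_nonneg_left h1 ha, mul_le_mul_of_nonneg_left h2 hc, hθ]
    · intro i
      dsimp only
      apply le_antisymm
      · refine Finset.sup'_le _ _ (fun j _ => ?_)
        rcases eq_or_ne j i with rfl | hji
        · simp
        · have := hξ j i hji
          linarith
      · have h := Finset.le_sup' (fun j => θ j + ξ j ⬝ᵥ (x i - x j)) (Finset.mem_univ i)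
        convert h using 1
        simp
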